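/- arXiv:2008.00570 — 2 statements merged into one kernel-verified Lean document; each statement's English description precedes it below -/
import Mathlib

section
/- Let [A₁ → A₂ → ⋯ → A_N] be a complex in an abelian category, 1 ≤ n ≤ N, and A'ₙ ⊆ Aₙ a subobject such that the composite A'ₙ → Aₙ → Aₙ/im(Aₙ₋₁ → Aₙ) is an epimorphism. Define A'ₙ₋₁ := A'ₙ ×_{Aₙ} Aₙ₋₁. Then the natural morphism of complexes [A₁ → ⋯ → Aₙ₋₂ → A'ₙ₋₁ → A'ₙ → Aₙ₊₁ → ⋯ → A_N] → [A₁ → ⋯ → A_N] is a quasi-isomorphism (induces isomorphisms on all homology objects). It suffices to prove this for N = 3, n = 2: given a complex A₁ →^{f} A₂ →^{g} A₃ and A'₂ ⊆ A₂ with A'₂ surjecting onto A₂/im(f), the inclusion of the complex [f⁻¹(A'₂) → A'₂ → A₃] into [A₁ → A₂ → A₃] is a quasi-isomorphism. -/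
/-- Dévissage lemma on complexes: given a complex `A₁ →f A₂ →g A₃` of modules
(`g ∘ f = 0`) and a submodule `A₂' ⊆ A₂ with `A₂' + im f = A₂`, setting
`A₁' := f⁻¹(A₂')`, the inclusion of the restricted complex `[A₁' → A₂' → A₃]` into
`[A₁ → A₂ → A₃]` is a quasi-isomorphism.  Expressed concretely on the three homology
spots:
* spot 1: `ker f ⊆ A₁'` (so the kernels agree);
* spot 2: injectivity `A₂' ⊓ im f ≤ f(A₁')` and surjectivity
  `ker g ≤ (ker g ⊓ A₂') ⊔ im f` of the induced map on middle homology;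
* spot 3: `g(A₂') = g(A₂)`. -/
theorem stmt_9 {R : Type*} [Ring R] {A₁ A₂ A₃ : Type*}
    [AddCommGroup A₁] [AddCommGroup A₂] [AddCommGroup A₃]
    [Module R A₁] [Module R A₂] [Module R A₃]
    (f : A₁ →ₗ[R] A₂) (g : A₂ →ₗ[R] A₃) (hgf : g ∘ₗ f = 0)
    (A₂' : Submodule R A₂) (hsum : A₂' ⊔ LinearMap.range f = ⊤) :
    LinearMap.ker f ≤ A₂'.comap f ∧
    A₂' ⊓ LinearMap.range f ≤ (A₂'.comap f).map f ∧
    LinearMap.ker g ≤ (LinearMap.ker g ⊓ A₂') ⊔ LinearMap.range f ∧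
    A₂'.map g = (⊤ : Submodule R A₂).map g := by
  have hgf' : ∀ x, g (f x) = 0 := fun x => congrFun (congrArg DFunLike.coe hgf) x
  refine ⟨?_, ?_, ?_, ?_⟩
  · intro x hx
    simp only [LinearMap.mem_ker] at hx
    simp [Submodule.mem_comap, hx]
  · rintro y ⟨hy, x, rfl⟩
    exact ⟨x, hy, rfl⟩
  · intro x hx
    have : x ∈ A₂' ⊔ LinearMap.range f := hsum ▸ Submodule.mem_top
    obtain ⟨a, ha, b, ⟨c, rfl⟩, rfl⟩ := Submodule.mem_sup.mp this
    refine Submodule.mem_sup.mpr ⟨a, ⟨?_, ha⟩, f c, ⟨c, rfl⟩, rfl⟩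
    have : g (a + f c) = 0 := hx
    simpa [hgf' c] using this
  · apply le_antisymm (Submodule.map_mono le_top)
    rintro y ⟨x, -, rfl⟩
    have : x ∈ A₂' ⊔ LinearMap.range f := hsum ▸ Submodule.mem_top
    obtain ⟨a, ha, b, ⟨c, rfl⟩, rfl⟩ := Submodule.mem_sup.mp this
    exact ⟨a, ha, by simp [hgf' c]⟩
end

section
/- Let Γ be a group and let [M₂ →^{f₂} M₁ →^{f₁} M₀] be a complex of Γ-modules (f₁ ∘ f₂ = 0) quasi-isomorphic to M[2] via a map i : M[2] → C where M is a Γ-module placed in degree −2, i.e., i induces isomorphisms ker(f₂) ≅ M, and the complex is exact at M₁ and M₀. Let α = (a, b, c) be a 0-cocycle of Γ with values in the complex C (so a : Γ² → M₂, b : Γ → M₁, c ∈ M₀ satisfying the hypercocycle conditions). Choose c' ∈ M₁ with f₁(c') = c, and b' : Γ → M₂ with f₂(b'_γ) = b_γ − (∂c')_γ where (∂c')_γ = γ·c' − c'. Then a − ∂b' takes values in ker(f₂) ≅ M, is a 2-cocycle of Γ with values in M, and its class in H²(Γ, M) corresponds to [α] under the isomorphism H²(Γ, M) ≅ H⁰(Γ,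 C) induced by i. -/
/-- Computing the class of a hyper-0-cocycle through a quasi-isomorphism
`M[2] → C = [M₂ → M₁ → M₀]`.  Given a `0`-cocycle `(a, b, c)` of `Γ` with values in
`C`, a lift `c'` of `c` and `b'` with `f₂(b'_γ) = b_γ − ∂c'`, the difference
`a − ∂b'` takes values in `ker f₂ ≅ M`, is a `2`-cocycle of `Γ` with values in `M`,
and its cohomology class is independent of the choices made (two choices differ by a
coboundary), representing the class of `(a,b,c)`. -/
theorem stmt_14 {Γ : Type*} [Group Γ]
    {M M₂ M₁ M₀ : Type*}
    [AddCommGroup M] [AddCommGroup M₂] [AddCommGroup M₁] [AddCommGroup M₀]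
    [DistribMulAction Γ M] [DistribMulAction Γ M₂] [DistribMulAction Γ M₁]
    [DistribMulAction Γ M₀]
    (f₂ : M₂ →+ M₁) (f₁ : M₁ →+ M₀) (i : M →+ M₂)
    (hf₂ : ∀ (γ : Γ) (m : M₂), f₂ (γ • m) = γ • f₂ m)
    (hf₁ : ∀ (γ : Γ) (m : M₁), f₁ (γ • m) = γ • f₁ m)
    (hi : ∀ (γ : Γ) (m : M), i (γ • m) = γ • i m)
    (hcomp : ∀ m : M₂, f₁ (f₂ m) = 0)
    (hiinj : Function.Injective i)
    (hiker : i.range = f₂.ker)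
    (hexact₁ : f₂.range = f₁.ker)
    (hf₁surj : Function.Surjective f₁)
    (a : Γ → Γ → M₂) (b : Γ → M₁) (c : M₀)
    (ha : ∀ γ₁ γ₂ γ₃ : Γ,
      γ₁ • a γ₂ γ₃ - a (γ₁ * γ₂) γ₃ + a γ₁ (γ₂ * γ₃) - a γ₁ γ₂ = 0)
    (hb : ∀ γ₁ γ₂ : Γ, f₂ (a γ₁ γ₂) = γ₁ • b γ₂ - b (γ₁ * γ₂) + b γ₁)
    (hc : ∀ γ : Γ, f₁ (b γ) = γ • c - c)
    (c' : M₁) (hc' : f₁ c' = c)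
    (b' : Γ → M₂) (hb' : ∀ γ : Γ, f₂ (b' γ) = b γ - (γ • c' - c')) :
    ∃ β : Γ → Γ → M,
      (∀ γ₁ γ₂ : Γ,
        i (β γ₁ γ₂) = a γ₁ γ₂ - (γ₁ • b' γ₂ - b' (γ₁ * γ₂) + b' γ₁)) ∧
      (∀ γ₁ γ₂ γ₃ : Γ,
        γ₁ • β γ₂ γ₃ - β (γ₁ * γ₂) γ₃ + β γ₁ (γ₂ * γ₃) - β γ₁ γ₂ = 0) ∧
      (∀ (c'' : M₁) (b'' : Γ → M₂) (β'' : Γ → Γ → M),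
        f₁ c'' = c →
        (∀ γ : Γ, f₂ (b'' γ) = b γ - (γ • c'' - c'')) →
        (∀ γ₁ γ₂ : Γ,
          i (β'' γ₁ γ₂) = a γ₁ γ₂ - (γ₁ • b'' γ₂ - b'' (γ₁ * γ₂) + b'' γ₁)) →
        ∃ δ : Γ → M, ∀ γ₁ γ₂ : Γ,
          β γ₁ γ₂ - β'' γ₁ γ₂ = γ₁ • δ γ₂ - δ (γ₁ * γ₂) + δ γ₁) := by
  -- Step 1: construct β
  have hker : ∀ γ₁ γ₂ : Γ, ∃ m : M,
      i m = a γ₁ γ₂ - (γ₁ • b' γ₂ - b' (γ₁ * γ₂) + b' γ₁) := by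
    intro γ₁ γ₂
    have hx : f₂ (a γ₁ γ₂ - (γ₁ • b' γ₂ - b' (γ₁ * γ₂) + b' γ₁)) = 0 := by
      simp only [map_sub, map_add, hf₂, hb, hb', smul_sub, ← mul_smul]
      abel
    have : a γ₁ γ₂ - (γ₁ • b' γ₂ - b' (γ₁ * γ₂) + b' γ₁) ∈ i.range := by
      rw [hiker]; exact hx
    exact this
  choose β hβ using hker
  refine ⟨β, hβ, ?_, ?_⟩
  · -- cocycle condition
    intro γ₁ γ₂ γ₃
    apply hiinj
    rw [map_zero]
    simp only [map_sub, map_add, hi, hβ]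
    conv_rhs => rw [← ha γ₁ γ₂ γ₃]
    simp only [smul_sub, smul_add, ← mul_smul, mul_assoc]
    abel
  · -- independence of choices
    intro c'' b'' β'' hc'' hb'' hβ''
    obtain ⟨m, hm⟩ : c' - c'' ∈ f₂.range := by
      rw [hexact₁]
      simp [hc', hc'']
    have hδ : ∀ γ : Γ, ∃ d : M,
        i d = -(b' γ - b'' γ + (γ • m - m)) := by
      intro γ
      have hx : f₂ (-(b' γ - b'' γ + (γ • m - m))) = 0 := by
        simp only [map_neg, map_sub, map_add, hf₂, hb', hb'', hm, smul_sub]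
        abel
      have : -(b' γ - b'' γ + (γ • m - m)) ∈ i.range := by
        rw [hiker]; exact hx
      exact this
    choose δ hδ using hδ
    refine ⟨δ, fun γ₁ γ₂ => ?_⟩
    apply hiinj
    simp only [map_sub, map_add, hi, hβ, hβ'', hδ]
    simp only [smul_sub, smul_neg, smul_add, ← mul_smul]
    abel
end
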